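/- There exists a constant c > 0 such that for every hyperbolic ball B_h(w,s) in the upper half-plane model, m_1(B_h(w,s)) ≤ c·s, where m_1 is the restriction to the upper half plane of the standard Gaussian measure on R^2. -/
import Mathlib

open MeasureTheory Real Set

noncomputable section

/-- Open euclidean ball in `ℝ × ℝ` with center `c` and radius `r`. -/
def eBall (c : ℝ × ℝ) (r : ℝ) : Set (ℝ × ℝ) :=
  {p | (p.1 - c.1) ^ 2 + (p.2 - c.2) ^ 2 < r ^ 2}

/-- Open hyperbolic ball (upper half-plane model) with center `w` and radius `s`,
characterized via `cosh (d_h p w) = 1 + |p - w|² / (2 p₂ w₂)`. -/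
def hBall (w : ℝ × ℝ) (s : ℝ) : Set (ℝ × ℝ) :=
  {p | 0 < p.2 ∧ 1 + ((p.1 - w.1) ^ 2 + (p.2 - w.2) ^ 2) / (2 * p.2 * w.2) < Real.cosh s}

/-- The restriction to the upper half plane of the standard Gaussian measure on `ℝ²`. -/
def m1 : Measure (ℝ × ℝ) :=
  (volume.restrict {p : ℝ × ℝ | 0 < p.2}).withDensity
    (fun p => ENNReal.ofReal ((2 * π)⁻¹ * Real.exp (-(p.1 ^ 2 + p.2 ^ 2) / 2)))

/-- The region `A = {(x,y) : x > 1, 0 < y < 1/x}`. -/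
def regA : Set (ℝ × ℝ) := {p | 1 < p.1 ∧ 0 < p.2 ∧ p.2 < p.1⁻¹}

/-- Lebesgue measure restricted to `A`. -/
def m2 : Measure (ℝ × ℝ) := volume.restrict regA

/-- The measure `μ = m₁ + m₂`. -/
def mu : Measure (ℝ × ℝ) := m1 + m2

/-- The centered maximal function of a measure `ν` with respect to `μ`,
using hyperbolic balls. -/
def Mmax (μ ν : Measure (ℝ × ℝ)) (w : ℝ × ℝ) : ENNReal :=
  ⨆ (s : ℝ) (_ : 0 < s), ν (hBall w s) / μ (hBall w s)

private lemma gauss_lintegral :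
    ∫⁻ x : ℝ, ENNReal.ofReal (Real.exp (-(1/2) * x ^ 2)) = ENNReal.ofReal (Real.sqrt (2 * π)) := by
  rw [← ofReal_integral_eq_lintegral_ofReal (integrable_exp_neg_mul_sq (by norm_num : (0:ℝ) < 1/2))
    (Filter.Eventually.of_forall fun x => (Real.exp_pos _).le)]
  rw [integral_gaussian]
  norm_num [mul_comm]

private lemma exp_le_inv {y : ℝ} (hy : 0 < y) : Real.exp (-(y ^ 2) / 2) ≤ y⁻¹ := by
  have h1 : y ≤ Real.exp (y ^ 2 / 2) := by
    nlinarith [Real.add_one_le_exp (y ^ 2 / 2), sq_nonneg (y - 1)]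
  have h2 : Real.exp (-(y ^ 2) / 2) = (Real.exp (y ^ 2 / 2))⁻¹ := by
    rw [← Real.exp_neg]; ring_nf
  rw [h2]
  exact inv_anti₀ hy h1

/-- The Gaussian density on `ℝ × ℝ`. -/
private def gf : ℝ × ℝ → ENNReal :=
  fun p => ENNReal.ofReal ((2 * π)⁻¹ * Real.exp (-(p.1 ^ 2 + p.2 ^ 2) / 2))

private lemma gf_meas : Measurable gf := by
  unfold gf
  exact (Continuous.comp ENNReal.continuous_ofReal (by continuity)).measurable

private lemma gf_inner (y : ℝ) :
    ∫⁻ x : ℝ, gf (x, y) =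
      ENNReal.ofReal ((2 * π)⁻¹ * Real.sqrt (2 * π) * Real.exp (-(y ^ 2) / 2)) := by
  have hC : (0:ℝ) ≤ (2 * π)⁻¹ * Real.exp (-(y ^ 2) / 2) := by positivity
  have heq : ∀ x : ℝ, gf (x, y) =
      ENNReal.ofReal ((2 * π)⁻¹ * Real.exp (-(y ^ 2) / 2)) *
        ENNReal.ofReal (Real.exp (-(1/2) * x ^ 2)) := by
    intro x
    rw [← ENNReal.ofReal_mul hC]
    unfold gf
    congr 1
    rw [mul_assoc, ← Real.exp_add]
    ring_nf
  simp_rw [heq]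
  rw [lintegral_const_mul _ (by
    exact (Continuous.comp ENNReal.continuous_ofReal (by continuity)).measurable)]
  rw [gauss_lintegral, ← ENNReal.ofReal_mul hC]
  congr 1
  ring

theorem stmt15 :
    ∃ c : ℝ, 0 < c ∧ ∀ (w : ℝ × ℝ) (s : ℝ), 0 < w.2 → 0 < s →
      m1 (hBall w s) ≤ ENNReal.ofReal (c * s) := by
  refine ⟨2, by norm_num, fun w s hb hs => ?_⟩
  set a := w.1
  set b := w.2
  set u := b * Real.exp (-s) with hu_def
  set v := b * Real.exp s with hv_def
  have hu : 0 < u := mul_pos hb (Real.exp_pos _)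
  have hv : 0 < v := mul_pos hb (Real.exp_pos _)
  have huv : u < v :=
    mul_lt_mul_of_pos_left (Real.exp_lt_exp.mpr (by linarith : -s < s)) hb
  have hmeas : MeasurableSet ((univ : Set ℝ) ×ˢ Ioo u v) :=
    MeasurableSet.univ.prod measurableSet_Ioo
  -- the hyperbolic ball lies in the horizontal strip `u < y < v`
  have hsub : hBall w s ⊆ (univ : Set ℝ) ×ˢ Ioo u v := by
    rintro ⟨x, y⟩ ⟨hy, hlt⟩
    simp only [hBall, mem_setOf_eq] at hy hlt
    have hd : 0 < 2 * y * b := by positivity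
    have h2 : (x - a) ^ 2 + (y - b) ^ 2 < (Real.cosh s - 1) * (2 * y * b) :=
      (div_lt_iff₀ hd).mp (by linarith)
    have he : Real.exp (-s) * Real.exp s = 1 := by
      rw [← Real.exp_add]; simp
    have hsum : u + v = 2 * b * Real.cosh s := by
      rw [hu_def, hv_def, Real.cosh_eq]; ring
    have hmul : u * v = b ^ 2 := by
      rw [hu_def, hv_def]; nlinarith [he]
    have key : (y - u) * (y - v) < 0 := by nlinarith [sq_nonneg (x - a)]
    refine ⟨mem_univ _, ?_, ?_⟩
    · by_contra h
      push_neg at h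
      nlinarith
    · by_contra h
      push_neg at h
      nlinarith
  have hlog : Real.log (v / u) = 2 * s := by
    rw [Real.log_div hv.ne' hu.ne', hu_def, hv_def,
      Real.log_mul hb.ne' (Real.exp_ne_zero _), Real.log_mul hb.ne' (Real.exp_ne_zero _),
      Real.log_exp, Real.log_exp]
    ring
  have hint : IntegrableOn (fun y : ℝ => y⁻¹) (Ioo u v) := by
    have hc : ContinuousOn (fun y : ℝ => y⁻¹) (Icc u v) :=
      continuousOn_id.inv₀ fun x hx => (lt_of_lt_of_le hu hx.1).ne'
    exact hc.integrableOn_Icc.mono_set Ioo_subset_Icc_self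
  calc m1 (hBall w s) ≤ m1 ((univ : Set ℝ) ×ˢ Ioo u v) := measure_mono hsub
    _ = ∫⁻ p in (univ : Set ℝ) ×ˢ Ioo u v, gf p
          ∂(volume.restrict {p : ℝ × ℝ | 0 < p.2}) := withDensity_apply _ hmeas
    _ = ∫⁻ p in ((univ : Set ℝ) ×ˢ Ioo u v) ∩ {p : ℝ × ℝ | 0 < p.2}, gf p ∂volume := by
          rw [Measure.restrict_restrict hmeas]
    _ ≤ ∫⁻ p in (univ : Set ℝ) ×ˢ Ioo u v, gf p ∂volume :=
          lintegral_mono_set inter_subset_left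
    _ = ∫⁻ y in Ioo u v, ∫⁻ x, gf (x, y) := by
          rw [Measure.volume_eq_prod, ← Measure.prod_restrict, Measure.restrict_univ]
          exact lintegral_prod_symm' gf gf_meas
    _ = ∫⁻ y in Ioo u v,
          ENNReal.ofReal ((2 * π)⁻¹ * Real.sqrt (2 * π) * Real.exp (-(y ^ 2) / 2)) := by
          simp_rw [gf_inner]
    _ ≤ ∫⁻ y in Ioo u v, ENNReal.ofReal y⁻¹ := by
          refine setLIntegral_mono' measurableSet_Ioo fun y hy => ?_
          refine ENNReal.ofReal_le_ofReal ?_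
          have hsqrt : Real.sqrt (2 * π) ≤ 2 * π := by
            nlinarith [Real.sq_sqrt (by positivity : (0:ℝ) ≤ 2 * π),
              Real.sqrt_nonneg (2 * π), Real.pi_gt_three]
          have hC1 : (2 * π)⁻¹ * Real.sqrt (2 * π) ≤ 1 := by
            rw [← inv_mul_cancel₀ (by positivity : (2 * π : ℝ) ≠ 0)]
            exact mul_le_mul_of_nonneg_left hsqrt (by positivity)
          calc (2 * π)⁻¹ * Real.sqrt (2 * π) * Real.exp (-(y ^ 2) / 2)
              ≤ 1 * y⁻¹ := by
                refine mul_le_mul hC1 (exp_le_inv (lt_trans hu hy.1)) (Real.exp_pos _).le zero_le_one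
            _ = y⁻¹ := one_mul _
    _ = ENNReal.ofReal (2 * s) := by
          rw [← ofReal_integral_eq_lintegral_ofReal hint
            ((ae_restrict_iff' measurableSet_Ioo).mpr (Filter.Eventually.of_forall
              fun y hy => inv_nonneg.mpr (lt_trans hu hy.1).le))]
          rw [← integral_Ioc_eq_integral_Ioo, ← intervalIntegral.integral_of_le huv.le,
            integral_inv (by
              rw [Set.uIcc_of_le huv.le]
              exact fun h => absurd h.1 (not_le.mpr hu)), hlog]
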